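/- Let S be a finite nonempty set, l a positive integer, γ ∈ [0,1], and f : S^l → [0,1]. Suppose that for every probability distribution q on S which is a type of a length-l sequence over S (i.e., there exists t^l ∈ S^l such that q(s) = N(s|t^l)/l for every s ∈ S, where N(s|t^l) denotes the number of occurrences of s in t^l), one has ∑_{s^l ∈ S^l} f(s^l) · q(s_1)·…·q(s_l) ≥ 1 − γ. Then for every s^l ∈ S^l, (1/l!) · ∑_{σ ∈ Sym(l)} f(σ(s^l)) ≥ 1 − (l+1)^{|S|} · γ, where σ(s^l) := (s_{σ(1)}, …, s_{σ(l)}). -/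

import Mathlib

open Finset Equiv
open scoped Nat

namespace Robustify

set_option linter.unusedSectionVars false

variable {S : Type*} [Fintype S] [DecidableEq S] {l : ℕ}

def cnt (t : Fin l → S) (a : S) : ℕ := (Finset.univ.filter (fun i => t i = a)).card

lemma cnt_eq_card (t : Fin l → S) (a : S) : cnt t a = Fintype.card {i // t i = a} :=
  (Fintype.card_subtype _).symm

lemma sum_cnt (t : Fin l → S) : ∑ a, cnt t a = l := by
  have := Finset.card_eq_sum_card_fiberwise (f := t) (s := univ) (t := univ)
    (fun x _ => mem_univ _)
  simpa [cnt, Finset.card_univ] using this.symm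

lemma cnt_le (t : Fin l → S) (a : S) : cnt t a ≤ l := by
  simpa [cnt, Finset.card_univ] using Finset.card_filter_le (univ : Finset (Fin l)) (fun i => t i = a)

lemma prod_cnt (g : S → ℝ) (t : Fin l → S) : ∏ i, g (t i) = ∏ a, g a ^ cnt t a := by
  rw [← Finset.prod_fiberwise univ t (fun i => g (t i))]
  refine Finset.prod_congr rfl fun a _ => ?_
  rw [Finset.prod_congr rfl (fun i hi => by rw [(Finset.mem_filter.mp hi).2]),
    Finset.prod_const]
  rfl

lemma cnt_comp (t : Fin l → S) (σ : Equiv.Perm (Fin l)) : cnt (t ∘ ⇑σ) = cnt t := by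
  funext a
  rw [cnt_eq_card, cnt_eq_card]
  exact Fintype.card_congr (σ.subtypeEquiv fun i => Iff.rfl)

lemma exists_perm {t u : Fin l → S} (hc : cnt t = cnt u) :
    ∃ σ : Equiv.Perm (Fin l), t ∘ ⇑σ = u := by
  have e : ∀ a, {i // u i = a} ≃ {i // t i = a} := fun a =>
    Fintype.equivOfCardEq (by rw [← cnt_eq_card, ← cnt_eq_card, hc])
  refine ⟨((Equiv.sigmaFiberEquiv u).symm.trans (Equiv.sigmaCongrRight e)).trans
    (Equiv.sigmaFiberEquiv t), ?_⟩
  funext i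
  exact ((e (u i)) ⟨i, rfl⟩).2

lemma fact_add_le (m d : ℕ) : (m + d)! ≤ m ! * (m + d) ^ d := by
  induction d with
  | zero => simp
  | succ d ih =>
    rw [show m + (d + 1) = (m + d) + 1 by omega, Nat.factorial_succ, pow_succ]
    calc (m + d + 1) * (m + d)!
        ≤ (m + d + 1) * (m ! * (m + d) ^ d) := Nat.mul_le_mul_left _ ih
      _ ≤ (m + d + 1) * (m ! * (m + d + 1) ^ d) :=
          Nat.mul_le_mul_left _ (Nat.mul_le_mul_left _ (Nat.pow_le_pow_left (Nat.le_succ _) _))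
      _ = m ! * ((m + d) + 1) ^ d * ((m + d) + 1) := by ring
      _ = m ! * (((m + d) + 1) ^ d * ((m + d) + 1)) := by ring

lemma key_nat (n m : ℕ) : n ! * n ^ m ≤ m ! * n ^ n := by
  rcases le_total n m with h | h
  · have h2 : n ! * n ^ (m - n) ≤ m ! := Nat.factorial_mul_pow_sub_le_factorial h
    calc n ! * n ^ m = (n ! * n ^ (m - n)) * n ^ n := by
          rw [mul_assoc, ← pow_add, Nat.sub_add_cancel h]
      _ ≤ m ! * n ^ n := Nat.mul_le_mul_right _ h2
  · have h2 : n ! ≤ m ! * n ^ (n - m) := by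
      have := fact_add_le m (n - m)
      rwa [show m + (n - m) = n by omega] at this
    calc n ! * n ^ m ≤ (m ! * n ^ (n - m)) * n ^ m := Nat.mul_le_mul_right _ h2
      _ = m ! * n ^ n := by rw [mul_assoc, ← pow_add, Nat.sub_add_cancel h]

lemma key_real {l : ℕ} (hl : 0 < l) (N M : S → ℕ) (hN : ∑ a, N a = l) (hM : ∑ a, M a = l) :
    (∏ a, ((N a)! : ℝ)) * ∏ a, ((N a : ℝ) / l) ^ M a ≤
      (∏ a, ((M a)! : ℝ)) * ∏ a, ((N a : ℝ) / l) ^ N a := by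
  have hl0 : (0 : ℝ) < (l : ℝ) ^ l := by positivity
  have hnat := Finset.prod_le_prod' (s := (univ : Finset S))
      (f := fun a => (N a)! * N a ^ M a) (g := fun a => (M a)! * N a ^ N a)
      (fun a _ => key_nat (N a) (M a))
  rw [Finset.prod_mul_distrib, Finset.prod_mul_distrib] at hnat
  have hcast : (∏ a, ((N a)! : ℝ)) * ∏ a, (N a : ℝ) ^ M a ≤
      (∏ a, ((M a)! : ℝ)) * ∏ a, (N a : ℝ) ^ N a := by exact_mod_cast hnat
  have expand : ∀ (K : S → ℕ), (∑ a, K a = l) →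
      ∏ a, ((N a : ℝ) / l) ^ K a = (∏ a, (N a : ℝ) ^ K a) / (l : ℝ) ^ l := by
    intro K hK
    rw [← hK]
    simp only [div_pow]
    rw [Finset.prod_div_distrib, Finset.prod_pow_eq_pow_sum]
  rw [expand M hM, expand N hN, ← mul_div_assoc, ← mul_div_assoc]
  gcongr
lemma cancel_aux {A B FM FN pM pN L : ℝ} (hx : A * FM = L) (hy : B * FN = L)
    (hkey : FN * pM ≤ FM * pN) (hL : 0 ≤ L) (hFM : 0 < FM) (hFN : 0 < FN) :
    A * pM ≤ B * pN := by
  have h1 : (A * pM) * (FM * FN) ≤ (B * pN) * (FM * FN) := by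
    calc (A * pM) * (FM * FN) = (A * FM) * (FN * pM) := by ring
      _ = L * (FN * pM) := by rw [hx]
      _ ≤ L * (FM * pN) := mul_le_mul_of_nonneg_left hkey hL
      _ = (B * FN) * (FM * pN) := by rw [hy]
      _ = (B * pN) * (FM * FN) := by ring
  exact le_of_mul_le_mul_right h1 (by positivity)

lemma stab_card (t₀ : Fin l → S) :
    (univ.filter (fun σ : Equiv.Perm (Fin l) => t₀ ∘ ⇑σ = t₀)).card = ∏ a, (cnt t₀ a)! := by
  rw [← Fintype.card_subtype, DomMulAct.stabilizer_card]
  simp [cnt_eq_card]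

lemma fiber_card (t₀ t : Fin l → S) (ht : cnt t = cnt t₀) :
    (univ.filter (fun σ : Equiv.Perm (Fin l) => t₀ ∘ ⇑σ = t)).card = ∏ a, (cnt t₀ a)! := by
  obtain ⟨σ₀, hσ₀⟩ := exists_perm ht.symm
  rw [← stab_card t₀]
  apply Finset.card_bij (fun (σ : Equiv.Perm (Fin l)) _ => σ * σ₀⁻¹)
  · intro σ hσ
    simp only [mem_filter, mem_univ, true_and] at hσ ⊢
    funext i
    have h1 : t₀ (σ (σ₀⁻¹ i)) = t (σ₀⁻¹ i) := congrFun hσ _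
    have h2 : t₀ (σ₀ (σ₀⁻¹ i)) = t (σ₀⁻¹ i) := congrFun hσ₀ _
    show t₀ (σ (σ₀⁻¹ i)) = t₀ i
    rw [h1, ← h2, ← Equiv.Perm.mul_apply, mul_inv_cancel, Equiv.Perm.one_apply]
  · intro σ hσ σ' hσ' hEq
    exact mul_right_cancel hEq
  · intro τ hτ
    simp only [mem_filter, mem_univ, true_and] at hτ
    refine ⟨τ * σ₀, ?_, by group⟩
    simp only [mem_filter, mem_univ, true_and]
    funext i
    have h1 : t₀ (τ (σ₀ i)) = t₀ (σ₀ i) := congrFun hτ _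
    have h2 : t₀ (σ₀ i) = t i := congrFun hσ₀ i
    show t₀ (τ (σ₀ i)) = t i
    rw [h1, h2]

lemma fib_card (t₀ : Fin l → S) :
    (univ.filter (fun t : Fin l → S => cnt t = cnt t₀)).card * ∏ a, (cnt t₀ a)! = l ! := by
  have H : ∀ σ ∈ (univ : Finset (Equiv.Perm (Fin l))),
      t₀ ∘ ⇑σ ∈ univ.filter (fun t : Fin l → S => cnt t = cnt t₀) := by
    intro σ _
    simp [cnt_comp]
  have hcard := Finset.card_eq_sum_card_fiberwise H
  rw [Finset.card_univ, Fintype.card_perm, Fintype.card_fin] at hcard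
  have h2 : ∀ t ∈ univ.filter (fun t : Fin l → S => cnt t = cnt t₀),
      (univ.filter (fun σ : Equiv.Perm (Fin l) => t₀ ∘ ⇑σ = t)).card = ∏ a, (cnt t₀ a)! :=
    fun t ht => fiber_card t₀ t (mem_filter.mp ht).2
  rw [Finset.sum_congr rfl h2, Finset.sum_const, smul_eq_mul] at hcard
  exact hcard.symm

end Robustify

theorem robustification_technique
    {S : Type*} [Fintype S] [DecidableEq S] [Nonempty S] {l : ℕ} (hl : 0 < l)
    (γ : ℝ) (hγ : γ ∈ Set.Icc (0 : ℝ) 1)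
    (f : (Fin l → S) → ℝ) (hf : ∀ s : Fin l → S, f s ∈ Set.Icc (0 : ℝ) 1)
    (h : ∀ q : S → ℝ,
      (∃ t : Fin l → S, ∀ s : S,
        q s = ((Finset.univ.filter (fun i : Fin l => t i = s)).card : ℝ) / l) →
      1 - γ ≤ ∑ s : Fin l → S, f s * ∏ i : Fin l, q (s i)) :
    ∀ s : Fin l → S,
      1 - ((l : ℝ) + 1) ^ (Fintype.card S) * γ ≤
        (1 / (Nat.factorial l : ℝ)) * ∑ σ : Equiv.Perm (Fin l), f (s ∘ σ) := by
  intro s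
  have hl' : (0 : ℝ) < l := by exact_mod_cast hl
  have hfac : (0 : ℝ) < (l ! : ℝ) := by exact_mod_cast Nat.factorial_pos l
  set q : S → ℝ := fun a => ((Robustify.cnt s a : ℝ) / l) with hq_def
  have h1 : 1 - γ ≤ ∑ t : Fin l → S, f t * ∏ i, q (t i) := h q ⟨s, fun a => rfl⟩
  have hq_nonneg : ∀ a, 0 ≤ q a := fun a => by positivity
  have hP_nonneg : ∀ t : Fin l → S, 0 ≤ ∏ i, q (t i) :=
    fun t => Finset.prod_nonneg fun i _ => hq_nonneg _
  have hq_sum : ∑ a, q a = 1 := by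
    rw [hq_def, ← Finset.sum_div, ← Nat.cast_sum, Robustify.sum_cnt]
    exact div_self hl'.ne'
  have hP_sum : ∑ t : Fin l → S, ∏ i, q (t i) = 1 := by
    have := (Fintype.sum_pow q l).symm
    rw [hq_sum, one_pow] at this
    exact this
  -- the symmetrized function
  let F : (Fin l → S) → ℝ := fun t => (1 / (l ! : ℝ)) * ∑ σ : Equiv.Perm (Fin l), f (t ∘ ⇑σ)
  show 1 - ((l : ℝ) + 1) ^ (Fintype.card S) * γ ≤ F s
  have hF1 : ∀ t, F t ≤ 1 := by
    intro t
    show (1 / (l ! : ℝ)) * ∑ σ : Equiv.Perm (Fin l), f (t ∘ ⇑σ) ≤ 1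
    have hb : ∑ σ : Equiv.Perm (Fin l), f (t ∘ ⇑σ) ≤ (l ! : ℝ) := by
      calc ∑ σ : Equiv.Perm (Fin l), f (t ∘ ⇑σ) ≤ ∑ _σ : Equiv.Perm (Fin l), (1 : ℝ) :=
            Finset.sum_le_sum fun σ _ => (hf _).2
        _ = (l ! : ℝ) := by
            rw [Finset.sum_const, Finset.card_univ, Fintype.card_perm, Fintype.card_fin,
              nsmul_eq_mul, mul_one]
    rw [one_div, inv_mul_le_iff₀ hfac, mul_one]
    exact hb
  -- reindexing invariance of the iid sum
  have hsym : ∀ σ : Equiv.Perm (Fin l),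
      ∑ t : Fin l → S, f (t ∘ ⇑σ) * ∏ i, q (t i) = ∑ t : Fin l → S, f t * ∏ i, q (t i) := by
    intro σ
    have hbij : Function.Bijective (fun t : Fin l → S => t ∘ ⇑σ) := by
      constructor
      · intro a b hab
        funext i
        have := congrFun hab (σ.symm i)
        simpa using this
      · intro b
        refine ⟨b ∘ ⇑σ.symm, ?_⟩
        funext i
        simp
    calc ∑ t : Fin l → S, f (t ∘ ⇑σ) * ∏ i, q (t i)
        = ∑ t : Fin l → S, f (t ∘ ⇑σ) * ∏ i, q ((t ∘ ⇑σ) i) := by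
          refine Finset.sum_congr rfl fun t _ => ?_
          congr 1
          exact (Equiv.prod_comp σ fun i => q (t i)).symm
      _ = ∑ t : Fin l → S, f t * ∏ i, q (t i) :=
          Fintype.sum_bijective _ hbij _ _ (fun t => rfl)
  -- symmetrization of the hypothesis
  have h2 : 1 - γ ≤ ∑ t : Fin l → S, F t * ∏ i, q (t i) := by
    have e1 : ∑ t : Fin l → S, F t * ∏ i, q (t i)
        = ∑ t : Fin l → S, f t * ∏ i, q (t i) := by
      calc ∑ t : Fin l → S, F t * ∏ i, q (t i)
          = ∑ t : Fin l → S, (1 / (l ! : ℝ)) *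
              ∑ σ : Equiv.Perm (Fin l), f (t ∘ ⇑σ) * ∏ i, q (t i) := by
            refine Finset.sum_congr rfl fun t _ => ?_
            show ((1 / (l ! : ℝ)) * ∑ σ : Equiv.Perm (Fin l), f (t ∘ ⇑σ)) * ∏ i, q (t i) = _
            rw [mul_assoc, Finset.sum_mul]
        _ = (1 / (l ! : ℝ)) * ∑ t : Fin l → S,
              ∑ σ : Equiv.Perm (Fin l), f (t ∘ ⇑σ) * ∏ i, q (t i) := by
            rw [Finset.mul_sum]
        _ = (1 / (l ! : ℝ)) * ∑ σ : Equiv.Perm (Fin l),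
              ∑ t : Fin l → S, f (t ∘ ⇑σ) * ∏ i, q (t i) := by
            rw [Finset.sum_comm]
        _ = (1 / (l ! : ℝ)) * ∑ _σ : Equiv.Perm (Fin l),
              ∑ t : Fin l → S, f t * ∏ i, q (t i) := by
            exact congrArg _ (Finset.sum_congr rfl fun σ _ => hsym σ)
        _ = (1 / (l ! : ℝ)) * ((l ! : ℝ) * ∑ t : Fin l → S, f t * ∏ i, q (t i)) := by
            rw [Finset.sum_const, Finset.card_univ, Fintype.card_perm, Fintype.card_fin,
              nsmul_eq_mul]
        _ = ∑ t : Fin l → S, f t * ∏ i, q (t i) := by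
            field_simp
    rw [e1]
    exact h1
  -- F is constant on the type class of s
  have hFconst : ∀ t : Fin l → S, Robustify.cnt t = Robustify.cnt s → F t = F s := by
    intro t ht
    obtain ⟨σ₀, hσ₀⟩ := Robustify.exists_perm ht.symm
    show (1 / (l ! : ℝ)) * ∑ σ : Equiv.Perm (Fin l), f (t ∘ ⇑σ)
        = (1 / (l ! : ℝ)) * ∑ σ : Equiv.Perm (Fin l), f (s ∘ ⇑σ)
    congr 1
    calc ∑ σ : Equiv.Perm (Fin l), f (t ∘ ⇑σ)
        = ∑ σ : Equiv.Perm (Fin l), f (s ∘ ⇑(σ₀ * σ)) := by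
          refine Finset.sum_congr rfl fun σ _ => ?_
          congr 1
          funext i
          exact (congrFun hσ₀ (σ i)).symm
      _ = ∑ σ : Equiv.Perm (Fin l), f (s ∘ ⇑σ) :=
          Fintype.sum_equiv (Equiv.mulLeft σ₀) (fun σ => f (s ∘ ⇑(σ₀ * σ)))
            (fun σ => f (s ∘ ⇑σ)) (fun σ => rfl)

  -- type-class sums
  have hfib_sum : ∀ t₁ : Fin l → S,
      ∑ t ∈ univ.filter (fun t : Fin l → S => Robustify.cnt t = Robustify.cnt t₁),
        ∏ i, q (t i)
      = ((univ.filter (fun t : Fin l → S => Robustify.cnt t = Robustify.cnt t₁)).card : ℝ)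
          * ∏ a, q a ^ Robustify.cnt t₁ a := by
    intro t₁
    rw [Finset.sum_congr rfl (fun t ht => by
      rw [Robustify.prod_cnt q t, (Finset.mem_filter.mp ht).2]),
      Finset.sum_const, nsmul_eq_mul]
  set PT : ℝ := ∑ t ∈ univ.filter
      (fun t : Fin l → S => Robustify.cnt t = Robustify.cnt s), ∏ i, q (t i) with hPTdef
  have hPT0 : 0 ≤ PT := by
    rw [hPTdef]
    exact Finset.sum_nonneg fun t _ => hP_nonneg t
  -- comparison of type-class probabilities
  have hcmp : ∀ t₁ : Fin l → S,
      ∑ t ∈ univ.filter (fun t : Fin l → S => Robustify.cnt t = Robustify.cnt t₁),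
        ∏ i, q (t i) ≤ PT := by
    intro t₁
    rw [hPTdef, hfib_sum t₁, hfib_sum s]
    have hx : ((univ.filter
          (fun t : Fin l → S => Robustify.cnt t = Robustify.cnt t₁)).card : ℝ)
        * ∏ a, ((Robustify.cnt t₁ a)! : ℝ) = (l ! : ℝ) := by
      exact_mod_cast Robustify.fib_card t₁
    have hy : ((univ.filter
          (fun t : Fin l → S => Robustify.cnt t = Robustify.cnt s)).card : ℝ)
        * ∏ a, ((Robustify.cnt s a)! : ℝ) = (l ! : ℝ) := by
      exact_mod_cast Robustify.fib_card s
    refine Robustify.cancel_aux hx hy ?_ hfac.le (by positivity) (by positivity)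
    have hkey := Robustify.key_real hl (Robustify.cnt s) (Robustify.cnt t₁)
      (Robustify.sum_cnt s) (Robustify.sum_cnt t₁)
    simpa only [hq_def] using hkey
  -- decomposition over types
  have hdecomp : ∑ M ∈ Finset.image (Robustify.cnt (l := l)) univ,
      ∑ t ∈ univ.filter (fun t : Fin l → S => Robustify.cnt t = M), ∏ i, q (t i)
      = ∑ t : Fin l → S, ∏ i, q (t i) :=
    Finset.sum_fiberwise_of_maps_to (fun t _ => Finset.mem_image_of_mem _ (mem_univ t)) _
  -- number of types
  have himg_card : ((Finset.image (Robustify.cnt (l := l)) (univ : Finset (Fin l → S))).card : ℝ)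
      ≤ ((l : ℝ) + 1) ^ Fintype.card S := by
    have hnat : (Finset.image (Robustify.cnt (l := l)) (univ : Finset (Fin l → S))).card
        ≤ (l + 1) ^ Fintype.card S := by
      have h1 : (Finset.image (Robustify.cnt (l := l)) (univ : Finset (Fin l → S))).card
          ≤ Fintype.card (S → Fin (l + 1)) := by
        have h2 := Finset.card_le_card_of_injOn
          (f := fun (M : S → ℕ) (a : S) => (⟨min (M a) l, by omega⟩ : Fin (l + 1)))
          (s := Finset.image (Robustify.cnt (l := l)) (univ : Finset (Fin l → S)))
          (t := (univ : Finset (S → Fin (l + 1)))) (fun _ _ => mem_univ _) ?_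
        · simpa [Finset.card_univ] using h2
        · intro M₁ h₁ M₂ h₂ hEq
          obtain ⟨t₁, _, rfl⟩ := Finset.mem_image.mp (Finset.mem_coe.mp h₁)
          obtain ⟨t₂, _, rfl⟩ := Finset.mem_image.mp (Finset.mem_coe.mp h₂)
          funext a
          have e1 := congrArg Fin.val (congrFun hEq a)
          simpa [min_eq_left (Robustify.cnt_le t₁ a), min_eq_left (Robustify.cnt_le t₂ a)]
            using e1
      calc (Finset.image (Robustify.cnt (l := l)) (univ : Finset (Fin l → S))).card
          ≤ Fintype.card (S → Fin (l + 1)) := h1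
        _ = (l + 1) ^ Fintype.card S := by
            rw [Fintype.card_fun, Fintype.card_fin]
    exact_mod_cast hnat
  -- lower bound on PT
  have hCpos : (0 : ℝ) < ((l : ℝ) + 1) ^ Fintype.card S := by positivity
  have hPT : 1 / (((l : ℝ) + 1) ^ Fintype.card S) ≤ PT := by
    have h1le : (1 : ℝ) ≤
        ((Finset.image (Robustify.cnt (l := l)) (univ : Finset (Fin l → S))).card : ℝ) * PT := by
      calc (1 : ℝ) = ∑ t : Fin l → S, ∏ i, q (t i) := hP_sum.symm
        _ = ∑ M ∈ Finset.image (Robustify.cnt (l := l)) univ,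
              ∑ t ∈ univ.filter (fun t : Fin l → S => Robustify.cnt t = M),
                ∏ i, q (t i) := hdecomp.symm
        _ ≤ ∑ _M ∈ Finset.image (Robustify.cnt (l := l)) (univ : Finset (Fin l → S)), PT := by
            refine Finset.sum_le_sum fun M hM => ?_
            obtain ⟨t₁, _, rfl⟩ := Finset.mem_image.mp hM
            exact hcmp t₁
        _ = _ := by rw [Finset.sum_const, nsmul_eq_mul]
    rw [div_le_iff₀ hCpos]
    calc (1 : ℝ) ≤ _ * PT := h1le
      _ ≤ (((l : ℝ) + 1) ^ Fintype.card S) * PT := mul_le_mul_of_nonneg_right himg_card hPT0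
      _ = PT * ((l : ℝ) + 1) ^ Fintype.card S := mul_comm _ _
  -- split the symmetrized sum
  have hsplit := Finset.sum_filter_add_sum_filter_not univ
    (fun t : Fin l → S => Robustify.cnt t = Robustify.cnt s) (fun t => F t * ∏ i, q (t i))
  have hPsplit := Finset.sum_filter_add_sum_filter_not univ
    (fun t : Fin l → S => Robustify.cnt t = Robustify.cnt s) (fun t => ∏ i, q (t i))
  have hA : ∑ t ∈ univ.filter (fun t : Fin l → S => Robustify.cnt t = Robustify.cnt s),
      F t * ∏ i, q (t i) = F s * PT := by
    rw [hPTdef]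
    calc ∑ t ∈ univ.filter (fun t : Fin l → S => Robustify.cnt t = Robustify.cnt s),
          F t * ∏ i, q (t i)
        = ∑ t ∈ univ.filter (fun t : Fin l → S => Robustify.cnt t = Robustify.cnt s),
          F s * ∏ i, q (t i) :=
          Finset.sum_congr rfl fun t ht => by rw [hFconst t (Finset.mem_filter.mp ht).2]
      _ = _ := by rw [Finset.mul_sum]
  have hB : ∑ t ∈ univ.filter (fun t : Fin l → S => ¬Robustify.cnt t = Robustify.cnt s),
      F t * ∏ i, q (t i)
      ≤ ∑ t ∈ univ.filter (fun t : Fin l → S => ¬Robustify.cnt t = Robustify.cnt s),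
        ∏ i, q (t i) :=
    Finset.sum_le_sum fun t _ => mul_le_of_le_one_left (hP_nonneg t) (hF1 t)
  have hchain : 1 - γ ≤ F s * PT + (1 - PT) := by
    rw [← hsplit] at h2
    have hc : ∑ t ∈ univ.filter (fun t : Fin l → S => ¬Robustify.cnt t = Robustify.cnt s),
        ∏ i, q (t i) = 1 - PT := by
      rw [hPTdef]
      linarith [hPsplit, hP_sum]
    linarith [hA, hB, hc, h2]
  have hγ2 : PT * (1 - F s) ≤ γ := by nlinarith [hchain]
  have h6 : (1 / (((l : ℝ) + 1) ^ Fintype.card S)) * (1 - F s) ≤ γ := by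
    have hFs1 : F s ≤ 1 := hF1 s
    calc (1 / (((l : ℝ) + 1) ^ Fintype.card S)) * (1 - F s)
        ≤ PT * (1 - F s) := mul_le_mul_of_nonneg_right hPT (by linarith)
      _ ≤ γ := hγ2
  rw [div_mul_eq_mul_div, one_mul, div_le_iff₀ hCpos] at h6
  linarith [h6]
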